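/- The only equilibrium points (λ, e) with e on the boundary of the hypercube [0,1]^n are those with e = (0,...,0) or e = (1,...,1). -/

import Mathlib

open Finset Set

def IsEquilibrium (n : ℕ) [NeZero n] (lam e : Fin n → ℝ) : Prop :=
  ∀ i j : Fin n, lam i * e i * (1 - e (i + 1)) = lam j * e j * (1 - e (j + 1))

theorem stmt2 (n : ℕ) [NeZero n] (hn : 2 ≤ n) (lam e : Fin n → ℝ)
    (hlam : ∀ i, 0 < lam i) (he : ∀ i, e i ∈ Set.Icc (0:ℝ) 1)
    (heq : IsEquilibrium n lam e) (hbd : ∃ i, e i = 0 ∨ e i = 1) :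
    (∀ j, e j = 0) ∨ (∀ j, e j = 1) := by
  obtain ⟨i, hi⟩ := hbd
  have hc : ∃ i0 : Fin n, lam i0 * e i0 * (1 - e (i0 + 1)) = 0 := by
    rcases hi with h | h
    · exact ⟨i, by rw [h]; ring⟩
    · refine ⟨i - 1, ?_⟩
      have hidx : (i - 1) + 1 = i := by open Fin.CommRing in ring
      rw [hidx, h]; ring
  obtain ⟨i0, hi0⟩ := hc
  have hz : ∀ j, e j = 0 ∨ e (j + 1) = 1 := by
    intro j
    have h := heq j i0
    rw [hi0] at h
    rcases mul_eq_zero.mp h with h' | h'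
    · rcases mul_eq_zero.mp h' with h'' | h''
      · exact absurd h'' (hlam j).ne'
      · exact Or.inl h''
    · exact Or.inr (by linarith)
  by_cases hall : ∀ j, e j = 0
  · exact Or.inl hall
  · right
    push_neg at hall
    obtain ⟨k, hk⟩ := hall
    open Fin.NatCast Fin.CommRing in
    have key : ∀ m : ℕ, e (k + ((m + 1 : ℕ) : Fin n)) = 1 := by
      intro m
      induction m with
      | zero => simpa using (hz k).resolve_left hk
      | succ m ih =>
        have h1 : e (k + ((m + 1 : ℕ) : Fin n)) ≠ 0 := by rw [ih]; norm_num
        have h2 := (hz (k + ((m + 1 : ℕ) : Fin n))).resolve_left h1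
        convert h2 using 2
        push_cast
        ring
    intro j
    have h := key (j - k - 1).val
    open Fin.NatCast Fin.CommRing in
    have heqidx : k + ((((j - k - 1).val) + 1 : ℕ) : Fin n) = j := by
      push_cast
      ring
    rwa [heqidx] at h
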